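/- For all integers g₁, g₂ ≥ 3, the polynomial in ℚ[X] whose image in ℚ(X) equals P₁₂(g₁,g₂) + P₁₂(g₂,g₁) evaluates to 0 at X = −1; that is, the intersection Euler characteristic of the fixed-determinant moduli space M (whose intersection Poincaré polynomial with respect to the top perversity equals the sum of the Poincaré polynomials of its two components M₁₂ and M₂₁, with P_t(M₂₁) for genera (g₁,g₂) equal to P₁₂(g₂,g₁)) vanishes. -/

import Mathlib

open Polynomial

/-- `Q_g = ((1+X³)^{2g} − X^{2g}(1+X)^{2g}) / ((1−X²)(1−X⁴))` in `ℚ(X)`: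
the Harder–Narasimhan Poincaré polynomial of the moduli space of rank-2 stable
bundles of fixed odd-degree determinant on a smooth projective curve of genus `g`. -/
noncomputable def Qg (g : ℕ) : RatFunc ℚ :=
  ((1 + RatFunc.X ^ 3) ^ (2 * g) - RatFunc.X ^ (2 * g) * (1 + RatFunc.X) ^ (2 * g)) /
    ((1 - RatFunc.X ^ 2) * (1 - RatFunc.X ^ 4))

/-- `J_g = (1+X)^{2g}`, the Poincaré polynomial of the Jacobian. -/
noncomputable def Jg (g : ℕ) : RatFunc ℚ := (1 + RatFunc.X) ^ (2 * g)

/-- `Pⁿ = 1 + X² + ⋯ + X^{2n}`, the Poincaré polynomial of `ℙⁿ`. -/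
noncomputable def Pn (n : ℕ) : RatFunc ℚ := ∑ i ∈ Finset.range (n + 1), RatFunc.X ^ (2 * i)

/-- `K_g = 1 + X^{2g} + Σ_{0<i<2g, i even} (C(2g,i) + 2^{2g}) X^i`,
the Poincaré polynomial of the desingularized Kummer variety. -/
noncomputable def Kg (g : ℕ) : RatFunc ℚ :=
  1 + RatFunc.X ^ (2 * g) +
    ∑ i ∈ (Finset.Ioo 0 (2 * g)).filter (fun i => Even i),
      (((2 * g).choose i : RatFunc ℚ) + 2 ^ (2 * g)) * RatFunc.X ^ i

/-- `β̃₁` from Theorem 4.2 of the paper. -/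
noncomputable def betaT1 (g₂ : ℕ) : RatFunc ℚ :=
  Kg g₂ * RatFunc.X ^ (4 * g₂ - 4) / (1 + RatFunc.X ^ 2) +
    Jg g₂ * (RatFunc.X ^ (4 * g₂ - 2) / (1 - RatFunc.X ^ 4) +
      Pn (g₂ - 2) * RatFunc.X ^ (2 * g₂ - 2)) -
    2 ^ (2 * g₂) * Pn (g₂ - 1) * RatFunc.X ^ (4 * g₂ - 2) / (1 + RatFunc.X ^ 2) -
    2 ^ (2 * g₂) * (RatFunc.X ^ (6 * g₂ - 2) / (1 - RatFunc.X ^ 4) +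
      Pn (g₂ - 2) * RatFunc.X ^ (4 * g₂ - 2))

/-- `β̃₂` from Theorem 4.2 of the paper. -/
noncomputable def betaT2 (g₂ : ℕ) : RatFunc ℚ :=
  2 ^ (2 * g₂) * (RatFunc.X ^ (6 * g₂) / (1 - RatFunc.X ^ 4) +
    RatFunc.X ^ (4 * g₂ - 2) * Pn (g₂ - 1))

/-- `P₁₂(g₁,g₂) ∈ ℚ(X)`, the Poincaré polynomial of the component `M₁₂` of the moduli
space of rank-2 stable torsion-free sheaves with fixed determinant on a nodal curve
`X₁ ∪ X₂` whose smooth components have genera `g₁, g₂` (Theorem 4.2 of the paper). -/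
noncomputable def P12 (g₁ g₂ : ℕ) : RatFunc ℚ :=
  Qg g₁ * (1 - RatFunc.X ^ 4) *
      (Qg g₂ + Jg g₂ * RatFunc.X ^ (2 * g₂) / (1 - RatFunc.X ^ 4) - (betaT1 g₂ + betaT2 g₂)) +
    Qg g₁ * 2 ^ (2 * g₂) *
      (RatFunc.X ^ (6 * g₂) + RatFunc.X ^ (4 * g₂ - 2) * (1 - RatFunc.X ^ 4) * Pn (g₂ - 1)) +
    Qg g₁ *
      (Kg g₂ * RatFunc.X ^ (4 * g₂ - 4) * (1 - RatFunc.X ^ 2) +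
        Jg g₂ * (RatFunc.X ^ (4 * g₂ - 2) +
          RatFunc.X ^ (2 * g₂ - 2) * (1 - RatFunc.X ^ 4) * Pn (g₂ - 2)) -
        2 ^ (2 * g₂) *
          (RatFunc.X ^ (6 * g₂ - 2) +
            RatFunc.X ^ (4 * g₂ - 2) * (1 - RatFunc.X ^ 4) * Pn (g₂ - 2) +
            RatFunc.X ^ (4 * g₂ - 2) * (1 - RatFunc.X ^ 2) * Pn (g₂ - 1))) +
    Qg g₁ * Qg g₂ * RatFunc.X ^ 2 * (1 + 2 * RatFunc.X ^ 2 + RatFunc.X ^ 4)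

/-- For all integers `g₁, g₂ ≥ 3`, the polynomial in `ℚ[X]` whose image in `ℚ(X)` equals
`P₁₂(g₁,g₂) + P₁₂(g₂,g₁)` evaluates to `0` at `X = −1`: the intersection Euler
characteristic of the fixed-determinant moduli space `M` (whose intersection Poincaré
polynomial with respect to the top perversity is the sum of the Poincaré polynomials of
its two components `M₁₂` and `M₂₁`) vanishes. -/

local notation "aM" => algebraMap ℚ[X] (RatFunc ℚ)

noncomputable def zz : RatFunc ℚ := aM (X + 1)

lemma zz_ne : zz ≠ 0 := by
  apply RatFunc.algebraMap_ne_zero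
  intro h
  simpa using congrArg (Polynomial.eval 0) h

/-- order of vanishing at -1 is at least n -/
def Ok (n : ℤ) (f : RatFunc ℚ) : Prop :=
  ∃ a b : ℚ[X], b.eval (-1) ≠ 0 ∧ f = zz ^ n * aM a / aM b

lemma bnz {b : ℚ[X]} (hb : b.eval (-1) ≠ 0) : aM b ≠ 0 :=
  RatFunc.algebraMap_ne_zero (fun h => hb (by simp [h]))

lemma Ok.mul {m n : ℤ} {f g : RatFunc ℚ} (hf : Ok m f) (hg : Ok n g) :
    Ok (m + n) (f * g) := by
  obtain ⟨a₁, b₁, h₁, rfl⟩ := hf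
  obtain ⟨a₂, b₂, h₂, rfl⟩ := hg
  refine ⟨a₁ * a₂, b₁ * b₂, by simp [h₁, h₂], ?_⟩
  rw [zpow_add₀ zz_ne]
  field_simp [bnz h₁, bnz h₂]
  simp only [map_mul, map_add]
  ring

lemma Ok.add {n : ℤ} {f g : RatFunc ℚ} (hf : Ok n f) (hg : Ok n g) :
    Ok n (f + g) := by
  obtain ⟨a₁, b₁, h₁, rfl⟩ := hf
  obtain ⟨a₂, b₂, h₂, rfl⟩ := hg
  refine ⟨a₁ * b₂ + a₂ * b₁, b₁ * b₂, by simp [h₁, h₂], ?_⟩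
  field_simp [bnz h₁, bnz h₂]
  simp only [map_mul, map_add]
  ring

lemma Ok.neg {n : ℤ} {f : RatFunc ℚ} (hf : Ok n f) : Ok n (-f) := by
  obtain ⟨a, b, h, rfl⟩ := hf
  exact ⟨-a, b, h, by rw [map_neg]; ring⟩

lemma Ok.sub {n : ℤ} {f g : RatFunc ℚ} (hf : Ok n f) (hg : Ok n g) :
    Ok n (f - g) := by
  rw [sub_eq_add_neg]; exact hf.add hg.neg

lemma Ok.mono {m n : ℤ} {f : RatFunc ℚ} (h : m ≤ n) (hf : Ok n f) : Ok m f := by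
  obtain ⟨a, b, hb, rfl⟩ := hf
  refine ⟨(X + 1) ^ (n - m).toNat * a, b, hb, ?_⟩
  have e : aM ((X + 1) ^ (n - m).toNat * a) = zz ^ ((n - m).toNat : ℤ) * aM a := by
    rw [map_mul, map_pow, zpow_natCast]
    rfl
  rw [e, ← mul_assoc, ← zpow_add₀ zz_ne, Int.toNat_of_nonneg (by omega : (0:ℤ) ≤ n - m),
    add_sub_cancel]

lemma Ok.inv_div {m : ℤ} {b : ℚ[X]} (hb : b.eval (-1) ≠ 0) :
    Ok (-m) ((zz ^ m * aM b)⁻¹) := by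
  refine ⟨1, b, hb, ?_⟩
  rw [mul_inv, map_one, zpow_neg]
  field_simp

lemma Ok.div {m n : ℤ} {f g : RatFunc ℚ} {b : ℚ[X]} (hf : Ok n f)
    (hb : b.eval (-1) ≠ 0) (hg : g = zz ^ m * aM b) :
    Ok (n - m) (f / g) := by
  rw [div_eq_mul_inv, hg, sub_eq_add_neg]
  exact hf.mul (Ok.inv_div hb)

lemma ok_am (q : ℚ[X]) : Ok 0 (aM q) := ⟨q, 1, by norm_num, by simp⟩

lemma ok0_eq {f : RatFunc ℚ} (q : ℚ[X]) (h : f = aM q) : Ok 0 f := h ▸ ok_am q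

lemma ok_zz : Ok 1 zz := ⟨1, 1, by norm_num, by simp⟩

lemma Ok.pow {n : ℤ} {f : RatFunc ℚ} (hf : Ok n f) (k : ℕ) : Ok (k * n) (f ^ k) := by
  induction k with
  | zero => simpa using ok0_eq 1 (by simp)
  | succ k ih =>
    have h2 : ((k + 1 : ℕ) : ℤ) * n = (k : ℤ) * n + n := by push_cast; ring
    rw [pow_succ, h2]
    exact ih.mul hf





lemma zz_pow_nat (k : ℕ) : zz ^ (k : ℤ) = aM ((X + 1) ^ k) := by
  rw [zpow_natCast, map_pow]; rfl

lemma ok_X : Ok 0 (RatFunc.X : RatFunc ℚ) := ok0_eq X rfl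

lemma ok_Xpow (k : ℕ) : Ok 0 ((RatFunc.X : RatFunc ℚ) ^ k) :=
  ok0_eq (X ^ k) (by simp [map_pow])

lemma ok_one : Ok 0 (1 : RatFunc ℚ) := ok0_eq 1 (by simp)

lemma ok_two_pow (k : ℕ) : Ok 0 ((2 : RatFunc ℚ) ^ k) :=
  ok0_eq (2 ^ k) (by simp [map_pow, map_ofNat])

lemma one_add_X_eq : (1 + RatFunc.X : RatFunc ℚ) = zz := by
  unfold zz; rw [map_add, RatFunc.algebraMap_X, map_one, add_comm]

lemma ok_Jg (g : ℕ) : Ok (2 * (g : ℤ)) (Jg g) := by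
  have := ok_zz.pow (2 * g)
  rw [← one_add_X_eq] at this
  have e : ((2 * g : ℕ) : ℤ) * 1 = 2 * (g : ℤ) := by push_cast; ring
  rw [e] at this
  exact this

lemma ok_Pn (n : ℕ) : Ok 0 (Pn n) :=
  ok0_eq (∑ i ∈ Finset.range (n + 1), X ^ (2 * i)) (by unfold Pn; rw [map_sum]; simp [map_pow])

lemma ok_Kg (g : ℕ) : Ok 0 (Kg g) := by
  refine ok0_eq (1 + X ^ (2 * g) +
    ∑ i ∈ (Finset.Ioo 0 (2 * g)).filter (fun i => Even i),
      (((2 * g).choose i : ℚ[X]) + 2 ^ (2 * g)) * X ^ i) ?_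
  unfold Kg
  rw [map_add, map_add, map_sum]
  simp [map_pow, map_ofNat]

lemma den4 : (1 - RatFunc.X ^ 4 : RatFunc ℚ) = zz ^ (1 : ℤ) * aM (1 - X + X ^ 2 - X ^ 3) := by
  rw [zpow_one]
  unfold zz
  rw [← map_mul, show ((X : ℚ[X]) + 1) * (1 - X + X ^ 2 - X ^ 3) = 1 - X ^ 4 from by ring]
  simp [map_sub, map_pow]

lemma den4_eval : (1 - X + X ^ 2 - X ^ 3 : ℚ[X]).eval (-1) ≠ 0 := by norm_num

lemma Ok.div4 {n : ℤ} {f : RatFunc ℚ} (hf : Ok n f) :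
    Ok (n - 1) (f / (1 - RatFunc.X ^ 4)) := hf.div den4_eval den4

lemma den2 : (1 + RatFunc.X ^ 2 : RatFunc ℚ) = zz ^ (0 : ℤ) * aM (1 + X ^ 2) := by
  rw [zpow_zero, one_mul]; simp [map_add, map_pow]

lemma Ok.div2 {n : ℤ} {f : RatFunc ℚ} (hf : Ok n f) :
    Ok n (f / (1 + RatFunc.X ^ 2)) := by
  have := hf.div (b := 1 + X ^ 2) (by norm_num) den2
  simpa using this

lemma ok_1mX4 : Ok 1 (1 - RatFunc.X ^ 4 : RatFunc ℚ) :=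
  ⟨1 - X + X ^ 2 - X ^ 3, 1, by norm_num, by rw [den4]; simp⟩

lemma ok_Qg (g : ℕ) : Ok (2 * (g : ℤ) - 2) (Qg g) := by
  unfold Qg
  have h13 : Ok 1 (1 + RatFunc.X ^ 3 : RatFunc ℚ) := by
    refine ⟨1 - X + X ^ 2, 1, by norm_num, ?_⟩
    rw [zpow_one, map_one, div_one]
    unfold zz
    rw [← map_mul, show ((X : ℚ[X]) + 1) * (1 - X + X ^ 2) = 1 + X ^ 3 from by ring]
    simp [map_add, map_pow]
  have t1 : Ok (2 * (g : ℤ)) ((1 + RatFunc.X ^ 3) ^ (2 * g)) := by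
    have := h13.pow (2 * g)
    have e : ((2 * g : ℕ) : ℤ) * 1 = 2 * (g : ℤ) := by push_cast; ring
    rwa [e] at this
  have t2 : Ok (2 * (g : ℤ)) (RatFunc.X ^ (2 * g) * (1 + RatFunc.X) ^ (2 * g)) := by
    have := (ok_Xpow (2 * g)).mul (ok_Jg g)
    rwa [zero_add] at this
  have hnum := t1.sub t2
  have hden : (1 - RatFunc.X ^ 2) * (1 - RatFunc.X ^ 4)
      = zz ^ (2 : ℤ) * aM ((1 - X) ^ 2 * (1 + X ^ 2)) := by
    rw [show (2 : ℤ) = ((2 : ℕ) : ℤ) from rfl, zz_pow_nat, ← map_mul,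
      show ((X : ℚ[X]) + 1) ^ 2 * ((1 - X) ^ 2 * (1 + X ^ 2)) = (1 - X ^ 2) * (1 - X ^ 4) from
        by ring]
    simp [map_mul, map_sub, map_pow]
  exact hnum.div (by norm_num) hden




lemma ok_1mX2 : Ok 0 (1 - RatFunc.X ^ 2 : RatFunc ℚ) :=
  ok0_eq (1 - X ^ 2) (by simp [map_sub, map_pow])

lemma ok_1mX4' : Ok 0 (1 - RatFunc.X ^ 4 : RatFunc ℚ) := ok_1mX4.mono (by norm_num)

lemma ok_betaT1 (g₂ : ℕ) : Ok (-1) (betaT1 g₂) := by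
  unfold betaT1
  have t1 : Ok (-1) (Kg g₂ * RatFunc.X ^ (4 * g₂ - 4) / (1 + RatFunc.X ^ 2)) :=
    Ok.mono (show (-1:ℤ) ≤ 0 by norm_num) (by simpa using ((ok_Kg g₂).mul (ok_Xpow _)).div2)
  have t2 : Ok (-1) (Jg g₂ * (RatFunc.X ^ (4 * g₂ - 2) / (1 - RatFunc.X ^ 4) +
      Pn (g₂ - 2) * RatFunc.X ^ (2 * g₂ - 2))) := by
    have hi : Ok (-1) (RatFunc.X ^ (4 * g₂ - 2) / (1 - RatFunc.X ^ 4) +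
        Pn (g₂ - 2) * RatFunc.X ^ (2 * g₂ - 2)) := by
      have a1 : Ok (-1) ((RatFunc.X : RatFunc ℚ) ^ (4 * g₂ - 2) / (1 - RatFunc.X ^ 4)) := by
        simpa using (ok_Xpow (4 * g₂ - 2)).div4
      have a2 : Ok (-1) (Pn (g₂ - 2) * RatFunc.X ^ (2 * g₂ - 2)) :=
        Ok.mono (show (-1:ℤ) ≤ 0 by norm_num) (by simpa using (ok_Pn _).mul (ok_Xpow _))
      exact a1.add a2
    have hJ : Ok 0 (Jg g₂) := Ok.mono (by positivity) (ok_Jg g₂)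
    simpa using hJ.mul hi
  have t3 : Ok (-1) (2 ^ (2 * g₂) * Pn (g₂ - 1) * RatFunc.X ^ (4 * g₂ - 2) /
      (1 + RatFunc.X ^ 2)) :=
    Ok.mono (show (-1:ℤ) ≤ 0 by norm_num)
      (by simpa using (((ok_two_pow _).mul (ok_Pn _)).mul (ok_Xpow _)).div2)
  have t4 : Ok (-1) ((2 : RatFunc ℚ) ^ (2 * g₂) * (RatFunc.X ^ (6 * g₂ - 2) /
      (1 - RatFunc.X ^ 4) + Pn (g₂ - 2) * RatFunc.X ^ (4 * g₂ - 2))) := by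
    have hi : Ok (-1) ((RatFunc.X : RatFunc ℚ) ^ (6 * g₂ - 2) / (1 - RatFunc.X ^ 4) +
        Pn (g₂ - 2) * RatFunc.X ^ (4 * g₂ - 2)) := by
      have a1 : Ok (-1) ((RatFunc.X : RatFunc ℚ) ^ (6 * g₂ - 2) / (1 - RatFunc.X ^ 4)) := by
        simpa using (ok_Xpow (6 * g₂ - 2)).div4
      have a2 : Ok (-1) (Pn (g₂ - 2) * RatFunc.X ^ (4 * g₂ - 2)) :=
        Ok.mono (show (-1:ℤ) ≤ 0 by norm_num) (by simpa using (ok_Pn _).mul (ok_Xpow _))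
      exact a1.add a2
    simpa using (ok_two_pow (2 * g₂)).mul hi
  exact ((t1.add t2).sub t3).sub t4

lemma ok_betaT2 (g₂ : ℕ) : Ok (-1) (betaT2 g₂) := by
  unfold betaT2
  have hi : Ok (-1) ((RatFunc.X : RatFunc ℚ) ^ (6 * g₂) / (1 - RatFunc.X ^ 4) +
      RatFunc.X ^ (4 * g₂ - 2) * Pn (g₂ - 1)) := by
    have a1 : Ok (-1) ((RatFunc.X : RatFunc ℚ) ^ (6 * g₂) / (1 - RatFunc.X ^ 4)) := by
      simpa using (ok_Xpow (6 * g₂)).div4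
    have a2 : Ok (-1) ((RatFunc.X : RatFunc ℚ) ^ (4 * g₂ - 2) * Pn (g₂ - 1)) :=
      Ok.mono (show (-1:ℤ) ≤ 0 by norm_num) (by simpa using (ok_Xpow _).mul (ok_Pn _))
    exact a1.add a2
  simpa using (ok_two_pow (2 * g₂)).mul hi

lemma ok_P12 (g₁ g₂ : ℕ) (h₁ : 3 ≤ g₁) (h₂ : 3 ≤ g₂) : Ok 1 (P12 g₁ g₂) := by
  unfold P12
  have hQ1 : Ok 2 (Qg g₁) := Ok.mono (by omega) (ok_Qg g₁)
  have hQ2 : Ok (-1) (Qg g₂) := Ok.mono (by omega) (ok_Qg g₂)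
  have hQ2' : Ok 0 (Qg g₂) := Ok.mono (by omega) (ok_Qg g₂)
  have hJ : Ok 1 (Jg g₂) := Ok.mono (by omega) (ok_Jg g₂)
  have hJ0 : Ok 0 (Jg g₂) := Ok.mono (by omega) (ok_Jg g₂)
  have T1 : Ok 1 (Qg g₁ * (1 - RatFunc.X ^ 4) *
      (Qg g₂ + Jg g₂ * RatFunc.X ^ (2 * g₂) / (1 - RatFunc.X ^ 4) -
        (betaT1 g₂ + betaT2 g₂))) := by
    have hb : Ok (-1) (Qg g₂ + Jg g₂ * RatFunc.X ^ (2 * g₂) / (1 - RatFunc.X ^ 4) -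
        (betaT1 g₂ + betaT2 g₂)) := by
      have m1 : Ok (-1) (Jg g₂ * RatFunc.X ^ (2 * g₂) / (1 - RatFunc.X ^ 4)) := by
        have : Ok 0 (Jg g₂ * RatFunc.X ^ (2 * g₂) / (1 - RatFunc.X ^ 4)) := by
          simpa using (hJ.mul (ok_Xpow (2 * g₂))).div4
        exact this.mono (by norm_num)
      exact (hQ2.add m1).sub ((ok_betaT1 g₂).add (ok_betaT2 g₂))
    have := (hQ1.mul ok_1mX4).mul hb
    exact this.mono (by norm_num)
  have T2 : Ok 1 (Qg g₁ * 2 ^ (2 * g₂) *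
      (RatFunc.X ^ (6 * g₂) + RatFunc.X ^ (4 * g₂ - 2) * (1 - RatFunc.X ^ 4) *
        Pn (g₂ - 1))) := by
    have hi : Ok 0 ((RatFunc.X : RatFunc ℚ) ^ (6 * g₂) +
        RatFunc.X ^ (4 * g₂ - 2) * (1 - RatFunc.X ^ 4) * Pn (g₂ - 1)) := by
      have := ((ok_Xpow (4 * g₂ - 2)).mul ok_1mX4').mul (ok_Pn (g₂ - 1))
      exact (ok_Xpow (6 * g₂)).add (by simpa using this)
    have := (hQ1.mul (ok_two_pow (2 * g₂))).mul hi
    exact this.mono (by norm_num)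
  have T3 : Ok 1 (Qg g₁ *
      (Kg g₂ * RatFunc.X ^ (4 * g₂ - 4) * (1 - RatFunc.X ^ 2) +
        Jg g₂ * (RatFunc.X ^ (4 * g₂ - 2) +
          RatFunc.X ^ (2 * g₂ - 2) * (1 - RatFunc.X ^ 4) * Pn (g₂ - 2)) -
        2 ^ (2 * g₂) *
          (RatFunc.X ^ (6 * g₂ - 2) +
            RatFunc.X ^ (4 * g₂ - 2) * (1 - RatFunc.X ^ 4) * Pn (g₂ - 2) +
            RatFunc.X ^ (4 * g₂ - 2) * (1 - RatFunc.X ^ 2) * Pn (g₂ - 1)))) := by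
    have s1 : Ok 0 (Kg g₂ * RatFunc.X ^ (4 * g₂ - 4) * (1 - RatFunc.X ^ 2)) := by
      simpa using ((ok_Kg g₂).mul (ok_Xpow _)).mul ok_1mX2
    have s2 : Ok 0 (Jg g₂ * (RatFunc.X ^ (4 * g₂ - 2) +
        RatFunc.X ^ (2 * g₂ - 2) * (1 - RatFunc.X ^ 4) * Pn (g₂ - 2))) := by
      have := (ok_Xpow (4 * g₂ - 2)).add
        (by simpa using ((ok_Xpow (2 * g₂ - 2)).mul ok_1mX4').mul (ok_Pn (g₂ - 2)))
      simpa using hJ0.mul this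
    have s3 : Ok 0 ((2 : RatFunc ℚ) ^ (2 * g₂) *
        (RatFunc.X ^ (6 * g₂ - 2) +
          RatFunc.X ^ (4 * g₂ - 2) * (1 - RatFunc.X ^ 4) * Pn (g₂ - 2) +
          RatFunc.X ^ (4 * g₂ - 2) * (1 - RatFunc.X ^ 2) * Pn (g₂ - 1))) := by
      have i1 := (ok_Xpow (6 * g₂ - 2)).add
        (by simpa using ((ok_Xpow (4 * g₂ - 2)).mul ok_1mX4').mul (ok_Pn (g₂ - 2)))
      have i2 := i1.add
        (by simpa using ((ok_Xpow (4 * g₂ - 2)).mul ok_1mX2).mul (ok_Pn (g₂ - 1)))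
      simpa using (ok_two_pow (2 * g₂)).mul i2
    have := hQ1.mul ((s1.add s2).sub s3)
    exact this.mono (by norm_num)
  have T4 : Ok 1 (Qg g₁ * Qg g₂ * RatFunc.X ^ 2 *
      (1 + 2 * RatFunc.X ^ 2 + RatFunc.X ^ 4)) := by
    have hi : Ok 0 (1 + 2 * RatFunc.X ^ 2 + RatFunc.X ^ 4 : RatFunc ℚ) :=
      ok0_eq (1 + 2 * X ^ 2 + X ^ 4) (by simp [map_add, map_mul, map_pow, map_ofNat])
    have := (((hQ1.mul hQ2').mul (ok_Xpow 2)).mul hi)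
    exact this.mono (by norm_num)
  exact ((T1.add T2).add T3).add T4


theorem intersection_euler_char_zero (g₁ g₂ : ℕ) (h₁ : 3 ≤ g₁) (h₂ : 3 ≤ g₂) (p : ℚ[X])
    (hp : algebraMap ℚ[X] (RatFunc ℚ) p = P12 g₁ g₂ + P12 g₂ g₁) :
    p.eval (-1) = 0 := by
  obtain ⟨a, b, hb, he⟩ := (ok_P12 g₁ g₂ h₁ h₂).add (ok_P12 g₂ g₁ h₂ h₁)
  rw [← hp] at he
  have he2 : aM (p * b) = aM ((X + 1) * a) := by
    rw [map_mul, map_mul, he, zpow_one, div_mul_cancel₀ _ (bnz hb)]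
    rfl
  have he3 : p * b = (X + 1) * a := RatFunc.algebraMap_injective ℚ he2
  have h4 := congrArg (Polynomial.eval (-1)) he3
  simp only [eval_mul, eval_add, eval_X, eval_one] at h4
  norm_num at h4
  rcases h4 with h | h
  · exact h
  · exact absurd h hb
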